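/- Mixed-policy multiplicative weights bound: let π'_{t+1}(a|s) ∝ π'_t(a|s)exp(η Â_t(s,a)) and π_t = (1−α)π'_t + α·Unif(A), with Σ_a π_t(a|s)Â_t(s,a) = 0, |Â_t| ≤ 4W, η ≤ 1/(4W), α = 1/(1+√T), η = sqrt(log|A|/(16W²T)). Then for any comparator p: Σ_{t=0}^{T−1} Σ_a p(a) Â_t(s,a) ≤ 12W·sqrt(log(|A|)·T). -/

import Mathlib

lemma exp_quad_aux {x : ℝ} (hx : |x| ≤ 1) : Real.exp x ≤ 1 + x + (13/18) * x^2 := by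
  have h := Real.exp_bound hx (n := 3) (by norm_num)
  have hs : ∑ m ∈ Finset.range 3, x ^ m / (Nat.factorial m : ℝ) = 1 + x + x^2/2 := by
    norm_num [Finset.sum_range_succ, Nat.factorial]
  rw [hs] at h
  have h2 := (abs_le.mp h).2
  have h3 : |x|^3 ≤ x^2 := by
    have hx2 : |x|^3 = |x| * |x|^2 := by ring
    rw [hx2, sq_abs]
    nlinarith [sq_nonneg x, abs_nonneg x]
  norm_num [Nat.factorial] at h2
  nlinarith [abs_nonneg x]

set_option maxHeartbeats 1000000 in
/-- Mixed-policy multiplicative weights bound: with auxiliary updates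
`π'_{t+1}(a) ∝ π'_t(a) exp(η Â_t(a))` and played policy
`π_t = (1−α) π'_t + α·Unif(A)`, where `Σ_a π_t(a) Â_t(a) = 0`, `|Â_t| ≤ 4W`,
`η = sqrt(log|A|/(16W²T)) ≤ 1/(4W)` and `α = 1/(1+√T)`, any comparator `p`
satisfies `Σ_{t<T} Σ_a p(a) Â_t(a) ≤ 12W sqrt(log|A| · T)`. -/
theorem mixed_policy_mw_regret {A : Type*} [Fintype A] [Nonempty A]
    (T : ℕ) (hT : 0 < T) (W α η : ℝ) (hW : 0 < W)
    (hα : α = 1 / (1 + Real.sqrt T))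
    (hη : η = Real.sqrt (Real.log (Fintype.card A) / (16 * W ^ 2 * T)))
    (hη4 : η ≤ 1 / (4 * W))
    (Ahat : ℕ → A → ℝ) (π' π : ℕ → A → ℝ)
    (hπ'0 : ∀ a, π' 0 a = 1 / (Fintype.card A))
    (hπ'pos : ∀ t a, 0 < π' t a)
    (hupd : ∀ t a, π' (t + 1) a
      = π' t a * Real.exp (η * Ahat t a) / ∑ b, π' t b * Real.exp (η * Ahat t b))
    (hmix : ∀ t a, π t a = (1 - α) * π' t a + α / (Fintype.card A))
    (hbound : ∀ t a, |Ahat t a| ≤ 4 * W)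
    (hzero : ∀ t, ∑ a, π t a * Ahat t a = 0)
    (p : A → ℝ) (hp : ∀ a, 0 ≤ p a) (hp1 : ∑ a, p a = 1) :
    ∑ t ∈ Finset.range T, ∑ a, p a * Ahat t a
      ≤ 12 * W * Real.sqrt (Real.log (Fintype.card A) * T) := by
  -- basic facts about T, √T, α
  have hT1 : (1:ℝ) ≤ (T:ℝ) := by exact_mod_cast hT
  have hT0 : (0:ℝ) < (T:ℝ) := by linarith
  have hsT1 : 1 ≤ Real.sqrt T := by
    rw [show (1:ℝ) = Real.sqrt 1 by simp]
    exact Real.sqrt_le_sqrt hT1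
  have hsT0 : 0 < Real.sqrt T := by linarith
  have hss : Real.sqrt T * Real.sqrt T = (T:ℝ) := Real.mul_self_sqrt hT0.le
  have hα0 : 0 < α := by rw [hα]; positivity
  have h1α : 0 < 1 - α := by
    rw [hα]
    have : (1:ℝ) / (1 + Real.sqrt T) < 1 := by
      rw [div_lt_one (by linarith)]; linarith
    linarith
  have hαs : α * Real.sqrt T = 1 - α := by
    rw [hα]
    have h1 : (1:ℝ) + Real.sqrt T ≠ 0 := by positivity
    field_simp
    ring
  -- card
  set N : ℕ := Fintype.card A with hN
  have hN1 : 1 ≤ N := Fintype.card_pos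
  rcases eq_or_lt_of_le hN1 with hNone | hN2
  · -- trivial case: one action, all advantages vanish
    have hL0 : Real.log (N:ℝ) = 0 := by rw [← hNone]; simp
    rw [hL0]
    simp only [zero_mul, Real.sqrt_zero, mul_zero]
    have hA0 : ∀ t a, Ahat t a = 0 := by
      intro t a
      obtain ⟨a0, ha0⟩ := Fintype.card_eq_one_iff.mp hNone.symm
      have hz := hzero t
      have huniv : (Finset.univ : Finset A) = {a0} := by
        ext x; simp [ha0 x]
      rw [huniv, Finset.sum_singleton] at hz
      have hπpos : 0 < π t a0 := by
        rw [hmix t a0, ← hNone]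
        push_cast
        have := hπ'pos t a0
        nlinarith
      have : Ahat t a0 = 0 := by
        rcases mul_eq_zero.mp hz with h | h
        · exact absurd h hπpos.ne'
        · exact h
      rw [ha0 a]; exact this
    have : ∀ t ∈ Finset.range T, ∑ a, p a * Ahat t a = 0 := by
      intro t _; simp [hA0 t]
    rw [Finset.sum_congr rfl this]
    simp
  -- main case: N ≥ 2
  have hN2' : (2:ℝ) ≤ (N:ℝ) := by exact_mod_cast hN2
  set L : ℝ := Real.log (N:ℝ) with hLdef
  have hlog2 : Real.log 2 ≤ L := Real.log_le_log (by norm_num) hN2'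
  have hL0 : 0 < L := lt_of_lt_of_le (Real.log_pos (by norm_num)) hlog2
  have hll : Real.sqrt L * Real.sqrt L = L := Real.mul_self_sqrt hL0.le
  have hsL0 : 0 < Real.sqrt L := Real.sqrt_pos.mpr hL0
  -- explicit form of η
  have hηval : η = Real.sqrt L / (4 * W * Real.sqrt T) := by
    rw [hη, Real.sqrt_div hL0.le]
    congr 1
    rw [show 16 * W^2 * (T:ℝ) = (4*W*Real.sqrt T)^2 by nlinarith [hss]]
    exact Real.sqrt_sq (by positivity)
  have hη0 : 0 < η := by rw [hηval]; positivity
  -- π' sums to one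
  have hS : ∀ t, ∑ a, π' t a = 1 := by
    intro t
    induction t with
    | zero =>
      simp only [hπ'0, Finset.sum_const, Finset.card_univ, ← hN]
      have hN0 : (N:ℝ) ≠ 0 := Nat.cast_ne_zero.mpr (by omega)
      rw [nsmul_eq_mul]
      field_simp
    | succ t ih =>
      have hZpos : 0 < ∑ b, π' t b * Real.exp (η * Ahat t b) :=
        Finset.sum_pos (fun b _ => mul_pos (hπ'pos t b) (Real.exp_pos _))
          Finset.univ_nonempty
      simp only [hupd t]
      rw [← Finset.sum_div, div_self hZpos.ne']
  have hZpos : ∀ t, 0 < ∑ b, π' t b * Real.exp (η * Ahat t b) :=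
    fun t => Finset.sum_pos (fun b _ => mul_pos (hπ'pos t b) (Real.exp_pos _))
      Finset.univ_nonempty
  -- potential
  set Φ : ℕ → ℝ := fun t => ∑ a, p a * Real.log (π' t a) with hΦ
  set Z : ℕ → ℝ := fun t => ∑ b, π' t b * Real.exp (η * Ahat t b) with hZ
  -- per-step identity
  have step : ∀ t, η * ∑ a, p a * Ahat t a = Φ (t+1) - Φ t + Real.log (Z t) := by
    intro t
    have hlog : ∀ a, Real.log (π' (t+1) a)
        = Real.log (π' t a) + η * Ahat t a - Real.log (Z t) := by
      intro a
      rw [hupd t a, Real.log_div (mul_pos (hπ'pos t a) (Real.exp_pos _)).ne'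
        (hZpos t).ne', Real.log_mul (hπ'pos t a).ne' (Real.exp_ne_zero _),
        Real.log_exp]
    have : Φ (t+1) = ∑ a, (p a * Real.log (π' t a) + η * (p a * Ahat t a)
        - p a * Real.log (Z t)) := by
      simp only [hΦ]
      refine Finset.sum_congr rfl fun a _ => ?_
      rw [hlog a]; ring
    rw [this, Finset.sum_sub_distrib, Finset.sum_add_distrib, ← Finset.mul_sum,
      ← Finset.sum_mul, hp1]
    simp only [hΦ]
    ring
  -- bound on log Z t
  set C : ℝ := 4 * W * η / Real.sqrt T + (104/9) * η^2 * W^2 with hC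
  have hlogZ : ∀ t, Real.log (Z t) ≤ C := by
    intro t
    -- Σ π' Â ≤ 4W/√T
    have hπ'eq : ∀ a, π' t a = (π t a - α / N) / (1 - α) := by
      intro a
      rw [hmix t a]
      field_simp
      ring
    have hsumA : ∑ a, π' t a * Ahat t a
        = (-(α / N) * ∑ a, Ahat t a) / (1 - α) := by
      have : ∀ a, π' t a * Ahat t a
          = (π t a * Ahat t a - (α / N) * Ahat t a) / (1 - α) := by
        intro a; rw [hπ'eq a]; ring
      rw [Finset.sum_congr rfl (fun a _ => this a), ← Finset.sum_div,
        Finset.sum_sub_distrib, ← Finset.mul_sum, hzero t]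
      ring_nf
    have habs : |∑ a, Ahat t a| ≤ N * (4 * W) := by
      calc |∑ a, Ahat t a| ≤ ∑ a, |Ahat t a| := Finset.abs_sum_le_sum_abs _ _
        _ ≤ ∑ _a : A, (4 * W) := Finset.sum_le_sum (fun a _ => hbound t a)
        _ = N * (4 * W) := by
          rw [Finset.sum_const, Finset.card_univ, ← hN, nsmul_eq_mul]
    have hN0 : (0:ℝ) < (N:ℝ) := by positivity
    have hEπ' : ∑ a, π' t a * Ahat t a ≤ 4 * W / Real.sqrt T := by
      rw [hsumA]
      have h1 : -(α / N) * ∑ a, Ahat t a ≤ (α / N) * (N * (4 * W)) := by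
        have := neg_abs_le (∑ a, Ahat t a)
        have hαN : 0 ≤ α / (N:ℝ) := by positivity
        nlinarith [abs_nonneg (∑ a, Ahat t a)]
      have h2 : (α / N) * (N * (4 * W)) = 4 * W * α := by
        field_simp
      rw [div_le_iff₀ h1α]
      have h3 : 4 * W / Real.sqrt T * (1 - α) = 4 * W * α := by
        rw [← hαs]; field_simp
      linarith
    -- Σ π' Â² ≤ 16 W²
    have hEπ'2 : ∑ a, π' t a * (Ahat t a)^2 ≤ 16 * W^2 := by
      calc ∑ a, π' t a * (Ahat t a)^2 ≤ ∑ a, π' t a * (16 * W^2) := by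
            refine Finset.sum_le_sum fun a _ => ?_
            refine mul_le_mul_of_nonneg_left ?_ (hπ'pos t a).le
            have := hbound t a
            nlinarith [abs_nonneg (Ahat t a), sq_abs (Ahat t a)]
        _ = 16 * W^2 := by rw [← Finset.sum_mul, hS t, one_mul]
    -- Z t ≤ 1 + η Σπ'Â + (13/18) η² Σπ'Â²
    have hZle : Z t ≤ 1 + η * (4 * W / Real.sqrt T) + (13/18) * η^2 * (16 * W^2) := by
      have hterm : ∀ a, π' t a * Real.exp (η * Ahat t a)
          ≤ π' t a * (1 + η * Ahat t a + (13/18) * (η * Ahat t a)^2) := by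
        intro a
        refine mul_le_mul_of_nonneg_left (exp_quad_aux ?_) (hπ'pos t a).le
        rw [abs_mul, abs_of_pos hη0]
        calc η * |Ahat t a| ≤ η * (4 * W) :=
              mul_le_mul_of_nonneg_left (hbound t a) hη0.le
          _ ≤ 1 / (4 * W) * (4 * W) := mul_le_mul_of_nonneg_right hη4 (by positivity)
          _ = 1 := by field_simp
      calc Z t ≤ ∑ a, π' t a * (1 + η * Ahat t a + (13/18) * (η * Ahat t a)^2) :=
            Finset.sum_le_sum fun a _ => hterm a
        _ = 1 + η * ∑ a, π' t a * Ahat t a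
            + (13/18) * η^2 * ∑ a, π' t a * (Ahat t a)^2 := by
            rw [Finset.mul_sum, Finset.mul_sum]
            rw [show (1:ℝ) = ∑ a, π' t a from (hS t).symm, ← Finset.sum_add_distrib,
              ← Finset.sum_add_distrib]
            refine Finset.sum_congr rfl fun a _ => ?_
            rw [hS t]; ring
        _ ≤ 1 + η * (4 * W / Real.sqrt T) + (13/18) * η^2 * (16 * W^2) := by
            have h1 : η * ∑ a, π' t a * Ahat t a ≤ η * (4 * W / Real.sqrt T) :=
              mul_le_mul_of_nonneg_left hEπ' hη0.le
            have h2 : (13/18) * η^2 * ∑ a, π' t a * (Ahat t a)^2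
                ≤ (13/18) * η^2 * (16 * W^2) :=
              mul_le_mul_of_nonneg_left hEπ'2 (by positivity)
            linarith
    calc Real.log (Z t) ≤ Z t - 1 := Real.log_le_sub_one_of_pos (hZpos t)
      _ ≤ η * (4 * W / Real.sqrt T) + (13/18) * η^2 * (16 * W^2) := by linarith
      _ = C := by rw [hC]; ring
  -- telescoping
  have htel : η * ∑ t ∈ Finset.range T, ∑ a, p a * Ahat t a
      ≤ Φ T - Φ 0 + T * C := by
    rw [Finset.mul_sum]
    calc ∑ t ∈ Finset.range T, η * ∑ a, p a * Ahat t a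
        = ∑ t ∈ Finset.range T, (Φ (t+1) - Φ t + Real.log (Z t)) :=
          Finset.sum_congr rfl fun t _ => step t
      _ = (Φ T - Φ 0) + ∑ t ∈ Finset.range T, Real.log (Z t) := by
          rw [Finset.sum_add_distrib, Finset.sum_range_sub]
      _ ≤ (Φ T - Φ 0) + ∑ _t ∈ Finset.range T, C := by
          gcongr with t ht
          exact hlogZ t
      _ = Φ T - Φ 0 + T * C := by rw [Finset.sum_const, Finset.card_range, nsmul_eq_mul]
  -- Φ T ≤ 0
  have hΦT : Φ T ≤ 0 := by
    refine Finset.sum_nonpos fun a _ => mul_nonpos_of_nonneg_of_nonpos (hp a) ?_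
    refine Real.log_nonpos (hπ'pos T a).le ?_
    calc π' T a ≤ ∑ b, π' T b :=
          Finset.single_le_sum (fun b _ => (hπ'pos T b).le) (Finset.mem_univ a)
      _ = 1 := hS T
  -- Φ 0 = -L
  have hΦ0 : Φ 0 = -L := by
    have : ∀ a, p a * Real.log (π' 0 a) = p a * (-L) := by
      intro a
      rw [hπ'0 a, one_div, Real.log_inv, ← hLdef]
    simp only [hΦ]
    rw [Finset.sum_congr rfl fun a _ => this a, ← Finset.sum_mul, hp1, one_mul]
  have hmain : η * ∑ t ∈ Finset.range T, ∑ a, p a * Ahat t a ≤ L + T * C := by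
    rw [hΦ0] at htel
    linarith [hΦT]
  -- final arithmetic
  have hsL : 18/23 ≤ Real.sqrt L := by
    rw [show (18:ℝ)/23 = Real.sqrt ((18/23)^2) from (Real.sqrt_sq (by norm_num)).symm]
    refine Real.sqrt_le_sqrt ?_
    have := Real.log_two_gt_d9
    nlinarith
  have hfinal : L + T * C ≤ η * (12 * W * Real.sqrt (L * (T:ℝ))) := by
    rw [hC, hηval, Real.sqrt_mul hL0.le]
    rw [show L = Real.sqrt L * Real.sqrt L from hll.symm]
    rw [show (T:ℝ) = Real.sqrt T * Real.sqrt T from hss.symm]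
    set l := Real.sqrt L
    set s := Real.sqrt T
    have hW0 : W ≠ 0 := hW.ne'
    have hs0 : s ≠ 0 := hsT0.ne'
    field_simp
    rw [Real.sqrt_sq hsL0.le, Real.sqrt_sq hsT0.le]
    have key : 2304 * l ≤ 2944 * l^2 := by
      nlinarith [mul_nonneg (sub_nonneg.mpr hsL) hsL0.le]
    have hWs : (0:ℝ) ≤ W^4 * s^5 := by positivity
    nlinarith [mul_le_mul_of_nonneg_right key hWs]
  have := hmain.trans hfinal
  calc ∑ t ∈ Finset.range T, ∑ a, p a * Ahat t a
      = η * (∑ t ∈ Finset.range T, ∑ a, p a * Ahat t a) / η := by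
        field_simp
    _ ≤ η * (12 * W * Real.sqrt (L * (T:ℝ))) / η := by gcongr
    _ = 12 * W * Real.sqrt (L * (T:ℝ)) := by field_simp
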